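/- If T is an absolute-k-paranormal operator for some k ≥ 1 and T^n = λI for some natural number n ≥ 1 and some complex number λ, then T is normal. -/

import Mathlib

open ContinuousLinearMap in
/-- If `‖T x‖ ^ E ≤ M * ‖x‖ ^ E` for all `x`, then `‖T‖ ^ E ≤ M`. -/
lemma aux_opnorm_pow_le {H : Type*} [NormedAddCommGroup H] [NormedSpace ℂ H]
    (T : H →L[ℂ] H) {M : ℝ} {E : ℕ} (hE : E ≠ 0) (hM : 0 ≤ M)
    (h : ∀ x : H, ‖T x‖ ^ E ≤ M * ‖x‖ ^ E) : ‖T‖ ^ E ≤ M := by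
  have h1 : ‖T‖ ≤ M ^ ((E : ℝ)⁻¹) := by
    apply opNorm_le_bound _ (Real.rpow_nonneg hM _)
    intro x
    have h2 : ‖T x‖ ^ E ≤ (M ^ ((E : ℝ)⁻¹) * ‖x‖) ^ E := by
      rw [mul_pow, ← Real.rpow_natCast (M ^ ((E : ℝ)⁻¹)) E, ← Real.rpow_mul hM,
        inv_mul_cancel₀ (by exact_mod_cast hE : (E : ℝ) ≠ 0)]
      simpa using h x
    exact (pow_le_pow_iff_left₀ (norm_nonneg (T x)) (by positivity) hE).mp h2
  calc ‖T‖ ^ E ≤ (M ^ ((E : ℝ)⁻¹)) ^ E := pow_le_pow_left₀ (norm_nonneg _) h1 E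
    _ = M := Real.rpow_inv_natCast_pow hM hE

theorem stmt_8 {H : Type*} [NormedAddCommGroup H] [InnerProductSpace ℂ H] [CompleteSpace H]
    (T R : H →L[ℂ] H) (hR : R.IsPositive)
    (hR2 : R * R = ContinuousLinearMap.adjoint T * T)
    (k : ℕ) (hk : 1 ≤ k)
    (habs : ∀ x : H, ‖T x‖ ^ (k + 1) ≤ ‖(R ^ k) (T x)‖ * ‖x‖ ^ k)
    (n : ℕ) (hn : 1 ≤ n) (lam : ℂ) (hT : T ^ n = lam • (1 : H →L[ℂ] H)) :
    ContinuousLinearMap.adjoint T * T = T * ContinuousLinearMap.adjoint T := by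
  rcases subsingleton_or_nontrivial H with hS | hNT
  · ext x; exact Subsingleton.elim _ _
  obtain ⟨k', rfl⟩ : ∃ k', k = k' + 1 := ⟨k - 1, (Nat.succ_pred_eq_of_pos hk).symm⟩
  obtain ⟨n', rfl⟩ : ∃ n', n = n' + 1 := ⟨n - 1, (Nat.succ_pred_eq_of_pos hn).symm⟩
  set A := ContinuousLinearMap.adjoint T with hA
  set c := ‖T‖ with hc
  -- R is self-adjoint
  have hRsa : ContinuousLinearMap.adjoint R = R := by
    rw [← ContinuousLinearMap.star_eq_adjoint]; exact hR.isSelfAdjoint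
  -- ‖R y‖ = ‖T y‖
  have hRT : ∀ y : H, ‖R y‖ = ‖T y‖ := by
    intro y
    have h1 : (inner ℂ (R y) (R y) : ℂ) = inner ℂ (T y) (T y) := by
      nth_rewrite 1 [← hRsa]
      rw [ContinuousLinearMap.adjoint_inner_left]
      have e1 : R (R y) = (R * R) y := rfl
      rw [e1, hR2]
      have e2 : (A * T) y = A (T y) := rfl
      rw [e2, hA, ContinuousLinearMap.adjoint_inner_right]
    rw [inner_self_eq_norm_sq_to_K, inner_self_eq_norm_sq_to_K] at h1
    have h2 : ‖R y‖ ^ 2 = ‖T y‖ ^ 2 := by exact_mod_cast h1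
    nlinarith [norm_nonneg (R y), norm_nonneg (T y)]
  -- ‖R‖ = ‖T‖
  have hnormR : ‖R‖ = c := by
    have h1 : ‖R‖ * ‖R‖ = ‖T‖ * ‖T‖ := by
      calc ‖R‖ * ‖R‖ = ‖star R * R‖ := (CStarRing.norm_star_mul_self).symm
        _ = ‖R * R‖ := by rw [hR.isSelfAdjoint.star_eq]
        _ = ‖ContinuousLinearMap.adjoint T * T‖ := by rw [hR2]
        _ = ‖star T * T‖ := by rw [ContinuousLinearMap.star_eq_adjoint]
        _ = ‖T‖ * ‖T‖ := CStarRing.norm_star_mul_self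
    nlinarith [norm_nonneg R, norm_nonneg T]
  -- key inequality from absolute-k-paranormality
  have key : ∀ (x : H) (m : ℕ),
      ‖(T ^ (m + 1)) x‖ ^ (k' + 2) ≤ c ^ k' * ‖(T ^ (m + 2)) x‖ * ‖(T ^ m) x‖ ^ (k' + 1) := by
    intro x m
    have hpow1 : (T ^ (m + 1)) x = T ((T ^ m) x) := by rw [pow_succ']; rfl
    have hpow2 : (T ^ (m + 2)) x = T ((T ^ (m + 1)) x) := by rw [pow_succ']; rfl
    have h1 := habs ((T ^ m) x)
    rw [← hpow1] at h1
    have hRk : ‖(R ^ (k' + 1)) ((T ^ (m + 1)) x)‖ ≤ c ^ k' * ‖(T ^ (m + 2)) x‖ := by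
      have e1 : (R ^ (k' + 1)) ((T ^ (m + 1)) x) = (R ^ k') (R ((T ^ (m + 1)) x)) := by
        rw [pow_succ]; rfl
      rw [e1]
      calc ‖(R ^ k') (R ((T ^ (m + 1)) x))‖ ≤ ‖R ^ k'‖ * ‖R ((T ^ (m + 1)) x)‖ :=
            ContinuousLinearMap.le_opNorm _ _
        _ ≤ ‖R‖ ^ k' * ‖R ((T ^ (m + 1)) x)‖ := by
            apply mul_le_mul_of_nonneg_right _ (norm_nonneg _)
            rcases Nat.eq_zero_or_pos k' with h | h
            · subst h; simpa using ContinuousLinearMap.norm_id_le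
            · exact norm_pow_le' R h
        _ = c ^ k' * ‖(T ^ (m + 2)) x‖ := by rw [hnormR, hRT, ← hpow2]
    calc ‖(T ^ (m + 1)) x‖ ^ (k' + 2)
        ≤ ‖(R ^ (k' + 1)) ((T ^ (m + 1)) x)‖ * ‖(T ^ m) x‖ ^ (k' + 1) := h1
      _ ≤ (c ^ k' * ‖(T ^ (m + 2)) x‖) * ‖(T ^ m) x‖ ^ (k' + 1) :=
          mul_le_mul_of_nonneg_right hRk (by positivity)
      _ = c ^ k' * ‖(T ^ (m + 2)) x‖ * ‖(T ^ m) x‖ ^ (k' + 1) := by ring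
  by_cases hlam : lam = 0
  · -- nilpotent case : T = 0
    subst hlam
    have hT0 : T ^ (n' + 1) = 0 := by rw [hT, zero_smul]
    have down : ∀ m : ℕ, T ^ (m + 2) = 0 → T ^ (m + 1) = 0 := by
      intro m h0
      ext x
      have h1 := key x m
      rw [h0] at h1
      simp only [ContinuousLinearMap.zero_apply, norm_zero, mul_zero, zero_mul] at h1
      have h4 : ‖(T ^ (m + 1)) x‖ ^ (k' + 2) = 0 := le_antisymm h1 (by positivity)
      have h5 : ‖(T ^ (m + 1)) x‖ = 0 := pow_eq_zero_iff (Nat.succ_ne_zero _) |>.mp h4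
      simpa using norm_eq_zero.mp h5
    have desc : ∀ m : ℕ, T ^ (m + 1) = 0 → T = 0 := by
      intro m
      induction m with
      | zero => intro h; simpa using h
      | succ m ih => intro h; exact ih (down m h)
    rw [desc n' hT0]
    simp
  · -- invertible case
    have hinj : ∀ x : H, T x = 0 → x = 0 := by
      intro x hx
      have h1 : (T ^ (n' + 1)) x = (T ^ n') (T x) := by rw [pow_succ]; rfl
      rw [hx, map_zero, hT] at h1
      simp only [ContinuousLinearMap.smul_apply, ContinuousLinearMap.one_apply] at h1
      rcases smul_eq_zero.mp h1 with h | h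
      · exact absurd h hlam
      · exact h
    have hpinj : ∀ (m : ℕ) (x : H), (T ^ m) x = 0 → x = 0 := by
      intro m
      induction m with
      | zero => intro x hx; simpa using hx
      | succ m ih =>
        intro x hx
        have h1 : (T ^ (m + 1)) x = (T ^ m) (T x) := by rw [pow_succ]; rfl
        rw [h1] at hx
        exact hinj x (ih (T x) hx)
    have hc0 : 0 < c := by
      rw [hc, norm_pos_iff]
      intro h0
      obtain ⟨x, hx⟩ := exists_ne (0 : H)
      apply hx
      apply hpinj (n' + 1) x
      rw [h0, zero_pow (Nat.succ_ne_zero n')]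
      rfl
    -- main iterated inequality
    have main : ∀ x : H, x ≠ 0 → ∀ m : ℕ,
        ‖T x‖ ^ (∑ i ∈ Finset.range m, (k' + 1) ^ i) * c ^ m * ‖x‖ ≤
          ‖(T ^ m) x‖ * (c * ‖x‖) ^ (∑ i ∈ Finset.range m, (k' + 1) ^ i) := by
      intro x hx
      have ha : ∀ m : ℕ, 0 < ‖(T ^ m) x‖ := by
        intro m
        rw [norm_pos_iff]
        exact fun h0 => hx (hpinj m x h0)
      have hs : 0 < ‖x‖ := norm_pos_iff.mpr hx
      have Q : ∀ m : ℕ, ‖T x‖ ^ ((k' + 1) ^ m) * (c * ‖(T ^ m) x‖) ≤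
          ‖(T ^ (m + 1)) x‖ * (c * ‖x‖) ^ ((k' + 1) ^ m) := by
        intro m
        induction m with
        | zero =>
          simp only [pow_zero, pow_one, zero_add, ContinuousLinearMap.one_apply]
          exact le_rfl
        | succ m ih =>
          have em : m + 1 + 1 = m + 2 := rfl
          rw [em]
          rw [pow_succ (k' + 1) m, pow_mul, pow_mul]
          apply le_of_mul_le_mul_right _
            (mul_pos (pow_pos hc0 (k' + 1)) (pow_pos (ha m) (k' + 1)))
          have h1 : (‖T x‖ ^ ((k' + 1) ^ m) * (c * ‖(T ^ m) x‖)) ^ (k' + 1) ≤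
              (‖(T ^ (m + 1)) x‖ * (c * ‖x‖) ^ ((k' + 1) ^ m)) ^ (k' + 1) :=
            pow_le_pow_left₀ (by positivity) ih (k' + 1)
          calc (‖T x‖ ^ ((k' + 1) ^ m)) ^ (k' + 1) * (c * ‖(T ^ (m + 1)) x‖) *
                (c ^ (k' + 1) * ‖(T ^ m) x‖ ^ (k' + 1))
              = (‖T x‖ ^ ((k' + 1) ^ m) * (c * ‖(T ^ m) x‖)) ^ (k' + 1) *
                (c * ‖(T ^ (m + 1)) x‖) := by ring
            _ ≤ (‖(T ^ (m + 1)) x‖ * (c * ‖x‖) ^ ((k' + 1) ^ m)) ^ (k' + 1) *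
                (c * ‖(T ^ (m + 1)) x‖) := mul_le_mul_of_nonneg_right h1 (by positivity)
            _ = ‖(T ^ (m + 1)) x‖ ^ (k' + 2) *
                (c * ((c * ‖x‖) ^ ((k' + 1) ^ m)) ^ (k' + 1)) := by ring
            _ ≤ (c ^ k' * ‖(T ^ (m + 2)) x‖ * ‖(T ^ m) x‖ ^ (k' + 1)) *
                (c * ((c * ‖x‖) ^ ((k' + 1) ^ m)) ^ (k' + 1)) :=
                mul_le_mul_of_nonneg_right (key x m) (by positivity)
            _ = ‖(T ^ (m + 2)) x‖ * ((c * ‖x‖) ^ ((k' + 1) ^ m)) ^ (k' + 1) *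
                (c ^ (k' + 1) * ‖(T ^ m) x‖ ^ (k' + 1)) := by ring
      intro m
      induction m with
      | zero =>
        simp only [Finset.range_zero, Finset.sum_empty, pow_zero, one_mul, mul_one,
          ContinuousLinearMap.one_apply]
        exact le_rfl
      | succ m ih =>
        rw [Finset.sum_range_succ]
        calc ‖T x‖ ^ (∑ i ∈ Finset.range m, (k' + 1) ^ i + (k' + 1) ^ m) * c ^ (m + 1) * ‖x‖
            = (‖T x‖ ^ (∑ i ∈ Finset.range m, (k' + 1) ^ i) * c ^ m * ‖x‖) *
              (‖T x‖ ^ ((k' + 1) ^ m) * c) := by rw [pow_add]; ring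
          _ ≤ (‖(T ^ m) x‖ * (c * ‖x‖) ^ (∑ i ∈ Finset.range m, (k' + 1) ^ i)) *
              (‖T x‖ ^ ((k' + 1) ^ m) * c) := mul_le_mul_of_nonneg_right ih (by positivity)
          _ = (‖T x‖ ^ ((k' + 1) ^ m) * (c * ‖(T ^ m) x‖)) *
              (c * ‖x‖) ^ (∑ i ∈ Finset.range m, (k' + 1) ^ i) := by ring
          _ ≤ (‖(T ^ (m + 1)) x‖ * (c * ‖x‖) ^ ((k' + 1) ^ m)) *
              (c * ‖x‖) ^ (∑ i ∈ Finset.range m, (k' + 1) ^ i) :=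
              mul_le_mul_of_nonneg_right (Q m) (by positivity)
          _ = ‖(T ^ (m + 1)) x‖ *
              (c * ‖x‖) ^ (∑ i ∈ Finset.range m, (k' + 1) ^ i + (k' + 1) ^ m) := by
              rw [pow_add]; ring
    set E := ∑ i ∈ Finset.range (n' + 1), (k' + 1) ^ i with hE
    have hE1 : E ≠ 0 := by
      have h1 : (k' + 1) ^ 0 ≤ E :=
        Finset.single_le_sum (f := fun i => (k' + 1) ^ i) (fun i _ => Nat.zero_le _)
          (Finset.mem_range.mpr (Nat.succ_pos n'))
      simp only [pow_zero] at h1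
      omega
    have hbound : ∀ x : H, ‖T x‖ ^ E ≤ (‖lam‖ * c ^ E / c ^ (n' + 1)) * ‖x‖ ^ E := by
      intro x
      by_cases hx : x = 0
      · subst hx
        simp [zero_pow hE1]
      · have hs : 0 < ‖x‖ := norm_pos_iff.mpr hx
        have h1 := main x hx (n' + 1)
        rw [← hE] at h1
        have h2 : ‖(T ^ (n' + 1)) x‖ = ‖lam‖ * ‖x‖ := by
          rw [hT]
          simp only [ContinuousLinearMap.smul_apply, ContinuousLinearMap.one_apply]
          rw [norm_smul]
        rw [h2] at h1
        rw [div_mul_eq_mul_div, le_div_iff₀ (pow_pos hc0 (n' + 1))]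
        apply le_of_mul_le_mul_right _ hs
        calc ‖T x‖ ^ E * c ^ (n' + 1) * ‖x‖ ≤ ‖lam‖ * ‖x‖ * (c * ‖x‖) ^ E := h1
          _ = ‖lam‖ * c ^ E * ‖x‖ ^ E * ‖x‖ := by rw [mul_pow]; ring
    have hTle : c ^ E ≤ ‖lam‖ * c ^ E / c ^ (n' + 1) :=
      aux_opnorm_pow_le T hE1 (by positivity) hbound
    have hcn : c ^ (n' + 1) ≤ ‖lam‖ := by
      rw [le_div_iff₀ (pow_pos hc0 (n' + 1))] at hTle
      have h1 : c ^ (n' + 1) * c ^ E ≤ ‖lam‖ * c ^ E := by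
        calc c ^ (n' + 1) * c ^ E = c ^ E * c ^ (n' + 1) := by ring
          _ ≤ ‖lam‖ * c ^ E := hTle
      exact le_of_mul_le_mul_right h1 (pow_pos hc0 E)
    have hTn : ∀ j : ℕ, ‖T ^ j‖ ≤ c ^ j := by
      intro j
      rcases Nat.eq_zero_or_pos j with h | h
      · subst h; simpa using ContinuousLinearMap.norm_id_le
      · exact norm_pow_le' T h
    have hiso : ∀ x : H, ‖T x‖ = c * ‖x‖ := by
      intro x
      apply le_antisymm (ContinuousLinearMap.le_opNorm T x)
      have h1 : ‖lam‖ * ‖x‖ ≤ c ^ n' * ‖T x‖ := by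
        have e1 : (T ^ (n' + 1)) x = (T ^ n') (T x) := by rw [pow_succ]; rfl
        have e2 : ‖(T ^ (n' + 1)) x‖ = ‖lam‖ * ‖x‖ := by
          rw [hT]
          simp only [ContinuousLinearMap.smul_apply, ContinuousLinearMap.one_apply]
          rw [norm_smul]
        rw [← e2, e1]
        calc ‖(T ^ n') (T x)‖ ≤ ‖T ^ n'‖ * ‖T x‖ := ContinuousLinearMap.le_opNorm _ _
          _ ≤ c ^ n' * ‖T x‖ := mul_le_mul_of_nonneg_right (hTn n') (norm_nonneg _)
      have h2 : c ^ n' * (c * ‖x‖) ≤ c ^ n' * ‖T x‖ := by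
        calc c ^ n' * (c * ‖x‖) = c ^ (n' + 1) * ‖x‖ := by ring
          _ ≤ ‖lam‖ * ‖x‖ := mul_le_mul_of_nonneg_right hcn (norm_nonneg _)
          _ ≤ c ^ n' * ‖T x‖ := h1
      exact le_of_mul_le_mul_left h2 (pow_pos hc0 n')
    -- A * T = c^2 • 1
    have hTTc : A * T = ((c : ℂ) ^ 2) • (1 : H →L[ℂ] H) := by
      have h1 : ∀ x : H, (inner ℂ ((A * T) x) x : ℂ) =
          inner ℂ ((((c : ℂ) ^ 2) • (1 : H →L[ℂ] H)) x) x := by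
        intro x
        have e1 : (A * T) x = A (T x) := rfl
        rw [e1, hA, ContinuousLinearMap.adjoint_inner_left]
        rw [inner_self_eq_norm_sq_to_K]
        simp only [ContinuousLinearMap.smul_apply, ContinuousLinearMap.one_apply]
        rw [inner_smul_left, inner_self_eq_norm_sq_to_K]
        rw [hiso x, map_pow, Complex.conj_ofReal]
        push_cast
        exact mul_pow _ _ 2
      have h2 : ((A * T : H →L[ℂ] H) : H →ₗ[ℂ] H) =
          ((((c : ℂ) ^ 2) • (1 : H →L[ℂ] H) : H →L[ℂ] H) : H →ₗ[ℂ] H) := by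
        rw [← ext_inner_map]
        intro x
        exact h1 x
      exact ContinuousLinearMap.coe_injective h2
    have hS' : T * ((lam⁻¹ : ℂ) • T ^ n') = 1 := by
      rw [mul_smul_comm, ← pow_succ', hT, smul_smul, inv_mul_cancel₀ hlam, one_smul]
    have hA2 : A = ((c : ℂ) ^ 2) • ((lam⁻¹ : ℂ) • T ^ n') := by
      calc A = A * (T * ((lam⁻¹ : ℂ) • T ^ n')) := by rw [hS', mul_one]
        _ = (A * T) * ((lam⁻¹ : ℂ) • T ^ n') := by rw [mul_assoc]
        _ = (((c : ℂ) ^ 2) • (1 : H →L[ℂ] H)) * ((lam⁻¹ : ℂ) • T ^ n') := by rw [hTTc]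
        _ = ((c : ℂ) ^ 2) • ((lam⁻¹ : ℂ) • T ^ n') := by rw [smul_mul_assoc, one_mul]
    rw [hTTc, hA2, mul_smul_comm, hS']
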